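/- The graph K_r^2, the subdivision of the complete graph K_r in which every edge is replaced by a path of length 3, contains every graph on at most r vertices as a pivot-minor. -/

import Mathlib

open SimpleGraph

/-- Sets `A`, `B` are complete to each other: disjoint with all edges between them. -/
def Complete {V : Type} (G : SimpleGraph V) (A B : Set V) : Prop :=
  Disjoint A B ∧ ∀ a ∈ A, ∀ b ∈ B, G.Adj a b

/-- Sets `A`, `B` are anticomplete: disjoint with no edges between them. -/
def Anticomplete {V : Type} (G : SimpleGraph V) (A B : Set V) : Prop :=
  Disjoint A B ∧ ∀ a ∈ A, ∀ b ∈ B, ¬ G.Adj a b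

/-- `V1 = N(u) \ N[v]`. -/
def sideA {V : Type} (G : SimpleGraph V) (u v : V) : Set V :=
  G.neighborSet u \ insert v (G.neighborSet v)

/-- `V2 = N(v) \ N[u]`. -/
def sideB {V : Type} (G : SimpleGraph V) (u v : V) : Set V :=
  G.neighborSet v \ insert u (G.neighborSet u)

/-- `V3 = N(u) ∩ N(v)`. -/
def sideC {V : Type} (G : SimpleGraph V) (u v : V) : Set V :=
  G.neighborSet u ∩ G.neighborSet v

/-- The pair `{a, b}` crosses one of the three pairs of sets `(V1,V2)`, `(V2,V3)`, `(V1,V3)`. -/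
def pivotCross {V : Type} (G : SimpleGraph V) (u v a b : V) : Prop :=
  (a ∈ sideA G u v ∧ b ∈ sideB G u v) ∨ (a ∈ sideB G u v ∧ b ∈ sideA G u v) ∨
  (a ∈ sideB G u v ∧ b ∈ sideC G u v) ∨ (a ∈ sideC G u v ∧ b ∈ sideB G u v) ∨
  (a ∈ sideA G u v ∧ b ∈ sideC G u v) ∨ (a ∈ sideC G u v ∧ b ∈ sideA G u v)

lemma pivotCross_comm {V : Type} {G : SimpleGraph V} {u v a b : V} :
    pivotCross G u v a b ↔ pivotCross G u v b a := by
  unfold pivotCross; tauto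

/-- The pivot `G ∧ uv`: complement the edges between each of the pairs `(V1,V2)`, `(V2,V3)`,
`(V1,V3)` and then swap the labels of `u` and `v`. -/
def pivotGraph {V : Type} (G : SimpleGraph V) (u v : V) : SimpleGraph V :=
  letI := Classical.decEq V
  { Adj := fun x y => x ≠ y ∧
      Xor' (G.Adj (Equiv.swap u v x) (Equiv.swap u v y))
        (pivotCross G u v (Equiv.swap u v x) (Equiv.swap u v y)),
    symm := ⟨by
      rintro x y ⟨hxy, h⟩
      refine ⟨hxy.symm, ?_⟩
      have h1 : G.Adj (Equiv.swap u v x) (Equiv.swap u v y) ↔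
          G.Adj (Equiv.swap u v y) (Equiv.swap u v x) := G.adj_comm _ _
      have h2 : pivotCross G u v (Equiv.swap u v x) (Equiv.swap u v y) ↔
          pivotCross G u v (Equiv.swap u v y) (Equiv.swap u v x) := pivotCross_comm
      unfold Xor' at h ⊢
      rw [← h1, ← h2]
      exact h⟩,
    loopless := ⟨fun _ h => h.1 rfl⟩ }

/-- `H` is a pivot-minor of `G`: `H` is obtainable from `G` (up to isomorphism) by a sequence of
vertex deletions and pivots of edges. -/
inductive IsPivotMinor : ∀ {W U : Type}, SimpleGraph W → SimpleGraph U → Prop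
  | of_iso {W U : Type} {H : SimpleGraph W} {G : SimpleGraph U} :
      Nonempty (H ≃g G) → IsPivotMinor H G
  | pivot {W U : Type} {H : SimpleGraph W} {G : SimpleGraph U} (u v : U) :
      G.Adj u v → IsPivotMinor H (pivotGraph G u v) → IsPivotMinor H G
  | delete {W U : Type} {H : SimpleGraph W} {G : SimpleGraph U} (s : Set U) :
      IsPivotMinor H (G.induce s) → IsPivotMinor H G

/-- `G` is obtained from `H` by replacing each edge `uv` of `H` with a path whose length satisfies
`P u v h`: there are internally disjoint induced paths of `G` joining the images of the branch
vertices, covering all of `G`, whose edges are exactly the edges of `G`. -/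
def IsEdgeReplacement {U W : Type} (H : SimpleGraph U)
    (P : ∀ u v : U, H.Adj u v → ℕ → Prop) (G : SimpleGraph W) : Prop :=
  ∃ (x : U ↪ W) (p : ∀ u v : U, H.Adj u v → G.Walk (x u) (x v)),
    (∀ u v h, (p u v h).IsPath) ∧
    (∀ u v h, P u v h (p u v h).length) ∧
    (∀ u v h, p v u h.symm = (p u v h).reverse) ∧
    (∀ u v h w, w ∈ (p u v h).support → w ∈ Set.range x → w = x u ∨ w = x v) ∧
    (∀ u v h k l h', s(u, v) ≠ s(k, l) →
      ∀ w, w ∈ (p u v h).support → w ∈ (p k l h').support → w ∈ Set.range x) ∧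
    (∀ w : W, w ∈ Set.range x ∨ ∃ u v h, w ∈ (p u v h).support) ∧
    (∀ a b : W, G.Adj a b ↔ ∃ u v h, (p u v h).toSubgraph.Adj a b)

/-- `G` is obtained from `H` by replacing each edge with a path whose length satisfies `P`. -/
def IsSubdivisionWith {U W : Type} (H : SimpleGraph U) (P : ℕ → Prop) (G : SimpleGraph W) : Prop :=
  IsEdgeReplacement H (fun _ _ _ n => P n) G

/-- An `F`-filleting of `G`: subdivide (at least once) every edge of `G` not in `F`, and do not
subdivide the edges of `F`. -/
def IsFilleting {U W : Type} (G F : SimpleGraph U) (H : SimpleGraph W) : Prop :=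
  IsEdgeReplacement G (fun u v _ n => (F.Adj u v ∧ n = 1) ∨ (¬ F.Adj u v ∧ 2 ≤ n)) H

/-- Join of `H` with a single new vertex (`H + K_1`), the new vertex being `none`. -/
def addApex {W : Type} (H : SimpleGraph W) : SimpleGraph (Option W) :=
  SimpleGraph.fromRel fun a b =>
    a = none ∨ ∃ u v : W, a = some u ∧ b = some v ∧ H.Adj u v

/-- `F` with ends `a`, `b` is a fuzzy odd path (with length satisfying `P`): it consists of an odd
path from `a` to `b` through all the vertices, possibly together with one extra edge `xy` between
two internal vertices such that `xy` lies in a triangle. -/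
def IsFuzzyOddPath {T : Type} (F : SimpleGraph T) (a b : T) (P : ℕ → Prop) : Prop :=
  ∃ p : F.Walk a b, p.IsPath ∧ Odd p.length ∧ P p.length ∧ (∀ t : T, t ∈ p.support) ∧
    ((∀ c d : T, F.Adj c d ↔ p.toSubgraph.Adj c d) ∨
      ∃ x y : T, x ∈ p.support ∧ y ∈ p.support ∧ x ≠ a ∧ x ≠ b ∧ y ≠ a ∧ y ≠ b ∧
        F.Adj x y ∧ ¬ p.toSubgraph.Adj x y ∧ (∃ z : T, F.Adj x z ∧ F.Adj y z) ∧
        (∀ c d : T, F.Adj c d ↔ (p.toSubgraph.Adj c d ∨ (c = x ∧ d = y) ∨ (c = y ∧ d = x))))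

/-- `G` is a proper fuzzy odd subdivision of `H`: `G` is obtained from `H` by replacing each edge
with a fuzzy odd path of (odd) length at least `3`. -/
def IsProperFuzzyOddSubdivision {U W : Type} (H : SimpleGraph U) (G : SimpleGraph W) : Prop :=
  ∃ (x : U ↪ W) (S : ∀ u v : U, H.Adj u v → Set W)
    (hS : ∀ u v h, x u ∈ S u v h ∧ x v ∈ S u v h),
    (∀ u v h, S v u h.symm = S u v h) ∧
    (∀ u v h w, w ∈ S u v h → w ∈ Set.range x → w = x u ∨ w = x v) ∧
    (∀ u v h k l h', s(u, v) ≠ s(k, l) → ∀ w, w ∈ S u v h → w ∈ S k l h' → w ∈ Set.range x) ∧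
    (∀ w : W, w ∈ Set.range x ∨ ∃ u v h, w ∈ S u v h) ∧
    (∀ a b : W, G.Adj a b → ∃ u v h, a ∈ S u v h ∧ b ∈ S u v h) ∧
    (∀ u v h, IsFuzzyOddPath (G.induce (S u v h))
      ⟨x u, (hS u v h).1⟩ ⟨x v, (hS u v h).2⟩ (fun n => 3 ≤ n))

/-- A mass on a graph `G`. -/
structure IsMass {V : Type} (G : SimpleGraph V) (μ : Set V → ℝ) : Prop where
  map_empty : μ ∅ = 0
  map_univ : μ Set.univ = 1
  mono : ∀ ⦃X Y : Set V⦄, X ⊆ Y → μ X ≤ μ Y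
  subadditive : ∀ X Y : Set V, μ (X ∪ Y) ≤ μ X + μ Y

/-- `N^r[v]`: the ball of radius `r` about `v`. -/
def ball {V : Type} (G : SimpleGraph V) (v : V) (r : ℕ) : Set V :=
  {w | ∃ p : G.Walk v w, p.length ≤ r}

/-- `(G, μ)` is `ε`-coherent. -/
def EpsCoherent {V : Type} (G : SimpleGraph V) (μ : Set V → ℝ) (ε : ℝ) : Prop :=
  (∀ v : V, μ {v} < ε) ∧ (∀ v : V, μ (G.neighborSet v) < ε) ∧
  ∀ A B : Set V, Anticomplete G A B → min (μ A) (μ B) < ε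

/-- `(G, μ)` is `(ε, r)`-coherent. -/
def EpsRCoherent {V : Type} (G : SimpleGraph V) (μ : Set V → ℝ) (ε : ℝ) (r : ℕ) : Prop :=
  (∀ v : V, μ (_root_.ball G v r) < ε) ∧
  ∀ A B : Set V, Anticomplete G A B → min (μ A) (μ B) < ε

/-- `(G, μ)` is `(δ, r)`-focused. -/
def Focused {V : Type} (G : SimpleGraph V) (μ : Set V → ℝ) (δ : ℝ) (r : ℕ) : Prop :=
  ∀ Z : Set V, δ ≤ μ Z → ∃ v : Z, μ Z / 2 ≤ μ (Subtype.val '' _root_.ball (G.induce Z) v r)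

/-- `N[X]`. -/
def closedNbhd {V : Type} (G : SimpleGraph V) (X : Set V) : Set V :=
  X ∪ {w | ∃ a ∈ X, G.Adj a w}

/-- `x` is an `r`-centre of `X`: every vertex of `X` is within distance `r` of `x` in `G[X]`. -/
def IsCentre {V : Type} (G : SimpleGraph V) (X : Set V) (x : V) (hx : x ∈ X) (r : ℕ) : Prop :=
  ∀ y : X, ∃ p : (G.induce X).Walk ⟨x, hx⟩ y, p.length ≤ r

/-- A leaf: a vertex of degree at most 1. -/
def IsLeaf {V : Type} (G : SimpleGraph V) (v : V) : Prop := (G.neighborSet v).Subsingleton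

/-- `P` is a path graph. -/
def IsPathGraph {U : Type} (P : SimpleGraph U) : Prop :=
  ∃ (a b : U) (w : P.Walk a b), w.IsPath ∧ (∀ u : U, u ∈ w.support) ∧
    ∀ x y : U, P.Adj x y ↔ w.toSubgraph.Adj x y

/-- A caterpillar: a tree `T` such that `T − L(T)` is a path. -/
def IsCaterpillar {U : Type} (T : SimpleGraph U) : Prop :=
  T.IsTree ∧ IsPathGraph (T.induce {v | ¬ IsLeaf T v})

/-- Disjoint union of `q` stars, each with `p` leaves: `(i, none)` is the centre of the `i`-th
star and `(i, some j)` its leaves. -/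
def starForest (q p : ℕ) : SimpleGraph (Fin q × Option (Fin p)) :=
  SimpleGraph.fromRel fun a b => a.1 = b.1 ∧ a.2 = none ∧ b.2 ≠ none

/-- The clique number `ω(G)`. -/
noncomputable def cliqueNumber {V : Type} [Fintype V] (G : SimpleGraph V) : ℕ :=
  sSup {n | ∃ s : Finset V, G.IsNClique n s}

/-- The independence number `α(G)`. -/
noncomputable def indepNumber {V : Type} [Fintype V] (G : SimpleGraph V) : ℕ :=
  cliqueNumber Gᶜ

/-! ### Auxiliary machinery for Statement 1 -/

/-- swap with the classical instance, matching `pivotGraph`. -/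
private noncomputable def sw {W : Type} (a b y : W) : W := @Equiv.swap W (Classical.decEq W) a b y

private lemma sw_of_ne {W : Type} {a b y : W} (h1 : y ≠ a) (h2 : y ≠ b) : sw a b y = y :=
  @Equiv.swap_apply_of_ne_of_ne W (Classical.decEq W) _ _ _ h1 h2

private lemma sw_self_left {W : Type} (a b : W) : sw a b a = b :=
  @Equiv.swap_apply_left W (Classical.decEq W) a b
private lemma sw_self_right {W : Type} (a b : W) : sw a b b = a :=
  @Equiv.swap_apply_right W (Classical.decEq W) a b

private lemma sw_sw {W : Type} (a b y : W) : sw a b (sw a b y) = y :=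
  @Equiv.swap_apply_self W (Classical.decEq W) a b y

private lemma sw_eq_iff {W : Type} {a b y c : W} : sw a b y = c ↔ y = sw a b c := by
  constructor
  · rintro rfl; rw [sw_sw]
  · rintro rfl; rw [sw_sw]

private lemma pivotGraph_adj {W : Type} (G : SimpleGraph W) (a b y z : W) :
    (pivotGraph G a b).Adj y z ↔ y ≠ z ∧
      Xor' (G.Adj (sw a b y) (sw a b z)) (pivotCross G a b (sw a b y) (sw a b z)) :=
  Iff.rfl

lemma walk_length_three {W : Type} {G : SimpleGraph W} {s t : W} (w : G.Walk s t)
    (h : w.length = 3) :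
    ∃ (a b : W) (h1 : G.Adj s a) (h2 : G.Adj a b) (h3 : G.Adj b t),
      w = Walk.cons h1 (Walk.cons h2 (Walk.cons h3 Walk.nil)) := by
  cases w with
  | nil => simp at h
  | cons h1 w1 =>
    cases w1 with
    | nil => simp at h
    | cons h2 w2 =>
      cases w2 with
      | nil => simp at h
      | cons h3 w3 =>
        cases w3 with
        | nil => exact ⟨_, _, h1, h2, h3, rfl⟩
        | cons h4 w4 => simp [SimpleGraph.Walk.length_cons] at h

lemma pair_set_eq {α : Type} {p q s t : α} (h : ({p, q} : Set α) = {s, t})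
    (hpt : p ≠ t) (hsq : s ≠ q) : p = s ∧ q = t := by
  have hp : p = s ∨ p = t := by
    have : p ∈ ({s, t} : Set α) := h ▸ (by simp)
    simpa using this
  have hps : p = s := hp.resolve_right hpt
  have hq : q = s ∨ q = t := by
    have : q ∈ ({s, t} : Set α) := h ▸ (by simp)
    simpa using this
  exact ⟨hps, hq.resolve_left fun hqs => hsq hqs.symm⟩

lemma sides_gadget {W : Type} {G : SimpleGraph W} {a b xu xv : W}
    (hNa : G.neighborSet a = {xu, b}) (hNb : G.neighborSet b = {xv, a})
    (hab : a ≠ b) (hua : xu ≠ a) (hub : xu ≠ b) (hva : xv ≠ a) (hvb : xv ≠ b) (huv : xu ≠ xv) :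
    ∀ c d, pivotCross G a b c d ↔ ((c = xu ∧ d = xv) ∨ (c = xv ∧ d = xu)) := by
  have hA : sideA G a b = {xu} := by
    unfold sideA
    rw [hNa, hNb]
    ext y
    simp only [Set.mem_diff, Set.mem_insert_iff, Set.mem_singleton_iff]
    constructor
    · rintro ⟨h1 | h1, h2⟩
      · exact h1
      · exact absurd (Or.inl h1) h2
    · rintro rfl
      exact ⟨Or.inl rfl, by push_neg; exact ⟨hub, huv, hua⟩⟩
  have hB : sideB G a b = {xv} := by
    unfold sideB
    rw [hNa, hNb]
    ext y
    simp only [Set.mem_diff, Set.mem_insert_iff, Set.mem_singleton_iff]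
    constructor
    · rintro ⟨h1 | h1, h2⟩
      · exact h1
      · exact absurd (Or.inl h1) h2
    · rintro rfl
      exact ⟨Or.inl rfl, by push_neg; exact ⟨hva, huv.symm, hvb⟩⟩
  have hC : sideC G a b = ∅ := by
    unfold sideC
    rw [hNa, hNb]
    ext y
    simp only [Set.mem_inter_iff, Set.mem_insert_iff, Set.mem_singleton_iff,
      Set.mem_empty_iff_false, iff_false]
    rintro ⟨h1 | h1, h2 | h2⟩ <;> subst h1 <;> simp_all
  intro c d
  unfold pivotCross
  rw [hA, hB, hC]
  simp only [Set.mem_singleton_iff, Set.mem_empty_iff_false]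
  tauto

private lemma pivot_adj_gadget {W : Type} {G : SimpleGraph W} {a b xu xv : W}
    (hNa : G.neighborSet a = {xu, b}) (hNb : G.neighborSet b = {xv, a})
    (hab : a ≠ b) (hua : xu ≠ a) (hub : xu ≠ b) (hva : xv ≠ a) (hvb : xv ≠ b) (huv : xu ≠ xv) :
    ∀ y z, (pivotGraph G a b).Adj y z ↔ y ≠ z ∧
      Xor' (G.Adj (sw a b y) (sw a b z))
        ((sw a b y = xu ∧ sw a b z = xv) ∨ (sw a b y = xv ∧ sw a b z = xu)) := by
  intro y z
  rw [pivotGraph_adj, sides_gadget hNa hNb hab hua hub hva hvb huv]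

/-- A gadget for the pair `(u, v)` of branch vertices: a path `x u - a - b - x v` whose
internal vertices have no other neighbours. -/
def Gdgt {W : Type} {r : ℕ} (x : Fin r ↪ W) (G : SimpleGraph W) (u v : Fin r) : Prop :=
  ∃ a b : W, a ≠ b ∧ (∀ i, a ≠ x i) ∧ (∀ i, b ≠ x i) ∧
    G.neighborSet a = {x u, b} ∧ G.neighborSet b = {x v, a}

private lemma adj_of_nbhd_left {W : Type} {G : SimpleGraph W} {a c : W} {s : Set W}
    (h : G.neighborSet a = s) (hc : c ∈ s) : G.Adj a c := by
  have : c ∈ G.neighborSet a := h ▸ hc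
  exact this

private lemma nbhd_mem_iff {W : Type} {G : SimpleGraph W} {a c d : W}
    (h : G.neighborSet a = {c, d}) (y : W) : G.Adj a y ↔ (y = c ∨ y = d) := by
  constructor
  · intro hy
    have : y ∈ G.neighborSet a := hy
    rw [h] at this
    simpa using this
  · rintro (rfl | rfl)
    · exact adj_of_nbhd_left h (by simp)
    · exact adj_of_nbhd_left h (by simp)

/-- Gadgets of distinct pairs are disjoint. -/
private lemma gadget_disjoint {W : Type} {r : ℕ} {x : Fin r ↪ W} {G : SimpleGraph W}
    {u v u' v' : Fin r} {a b a' b' : W}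
    (ha : ∀ i, a ≠ x i) (hb : ∀ i, b ≠ x i) (ha' : ∀ i, a' ≠ x i) (hb' : ∀ i, b' ≠ x i)
    (hNa : G.neighborSet a = {x u, b}) (hNb : G.neighborSet b = {x v, a})
    (hNa' : G.neighborSet a' = {x u', b'}) (hNb' : G.neighborSet b' = {x v', a'})
    (hs : s(u, v) ≠ s(u', v')) :
    a ≠ a' ∧ a ≠ b' ∧ b ≠ a' ∧ b ≠ b' := by
  have haa : a = a' → x u = x u' ∧ b = b' := by
    rintro rfl
    exact pair_set_eq (hNa.symm.trans hNa') ((hb' u).symm) ((hb u').symm)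
  have hbb : b = b' → x v = x v' ∧ a = a' := by
    rintro rfl
    exact pair_set_eq (hNb.symm.trans hNb') ((ha' v).symm) ((ha v').symm)
  have hab' : a = b' → x u = x v' ∧ b = a' := by
    rintro rfl
    exact pair_set_eq (hNa.symm.trans hNb') ((ha' u).symm) ((hb v').symm)
  have hba' : b = a' → x v = x u' ∧ a = b' := by
    rintro rfl
    exact pair_set_eq (hNb.symm.trans hNa') ((hb' v).symm) ((ha u').symm)
  refine ⟨?_, ?_, ?_, ?_⟩
  · intro h
    obtain ⟨h1, h2⟩ := haa h
    obtain ⟨h3, _⟩ := hbb h2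
    exact hs (by rw [Sym2.eq_iff]; exact Or.inl ⟨x.injective h1, x.injective h3⟩)
  · intro h
    obtain ⟨h1, h2⟩ := hab' h
    obtain ⟨h3, _⟩ := hba' h2
    exact hs (by rw [Sym2.eq_iff]; exact Or.inr ⟨x.injective h1, x.injective h3⟩)
  · intro h
    obtain ⟨h1, h2⟩ := hba' h
    obtain ⟨h3, _⟩ := hab' h2
    exact hs (by rw [Sym2.eq_iff]; exact Or.inr ⟨x.injective h3, x.injective h1⟩)
  · intro h
    obtain ⟨h1, h2⟩ := hbb h
    obtain ⟨h3, _⟩ := haa h2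
    exact hs (by rw [Sym2.eq_iff]; exact Or.inl ⟨x.injective h3, x.injective h1⟩)

/-- The key single-pivot step. -/
private lemma pivot_step {W : Type} {r : ℕ} (x : Fin r ↪ W) (G : SimpleGraph W)
    (D : Fin r → Fin r → Prop)
    (hsym : ∀ i j, D i j → D j i) (hirr : ∀ i j, D i j → i ≠ j)
    (hterm : ∀ i j, G.Adj (x i) (x j) ↔ D i j)
    (hgad : ∀ u v : Fin r, u ≠ v → ¬ D u v → Gdgt x G u v)
    (u v : Fin r) (huv : u ≠ v) (hDuv : ¬ D u v) :
    ∃ G' : SimpleGraph W,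
      (∀ i j, G'.Adj (x i) (x j) ↔ (D i j ∨ s(i, j) = s(u, v))) ∧
      (∀ u' v' : Fin r, u' ≠ v' → ¬ D u' v' → s(u', v') ≠ s(u, v) → Gdgt x G' u' v') ∧
      ∀ {T : Type} {J : SimpleGraph T}, IsPivotMinor J G' → IsPivotMinor J G := by
  obtain ⟨a, b, hab, ha, hb, hNa, hNb⟩ := hgad u v huv hDuv
  have hua : x u ≠ a := (ha u).symm
  have hub : x u ≠ b := (hb u).symm
  have hva : x v ≠ a := (ha v).symm
  have hvb : x v ≠ b := (hb v).symm
  have hxuv : x u ≠ x v := fun h => huv (x.injective h)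
  have hGab : G.Adj a b := adj_of_nbhd_left hNa (by simp)
  have padj := pivot_adj_gadget hNa hNb hab hua hub hva hvb hxuv
  refine ⟨pivotGraph G a b, ?_, ?_, fun h => IsPivotMinor.pivot a b hGab h⟩
  · intro i j
    have hia : x i ≠ a := (ha i).symm
    have hib : x i ≠ b := (hb i).symm
    have hja : x j ≠ a := (ha j).symm
    have hjb : x j ≠ b := (hb j).symm
    rw [padj, sw_of_ne hia hib, sw_of_ne hja hjb, hterm]
    have hcr : ((x i = x u ∧ x j = x v) ∨ (x i = x v ∧ x j = x u)) ↔ s(i, j) = s(u, v) := by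
      rw [Sym2.eq_iff]
      constructor
      · rintro (⟨h1, h2⟩ | ⟨h1, h2⟩)
        · exact Or.inl ⟨x.injective h1, x.injective h2⟩
        · exact Or.inr ⟨x.injective h1, x.injective h2⟩
      · rintro (⟨rfl, rfl⟩ | ⟨rfl, rfl⟩)
        · exact Or.inl ⟨rfl, rfl⟩
        · exact Or.inr ⟨rfl, rfl⟩
    rw [hcr]
    have hnot : s(i, j) = s(u, v) → ¬ D i j := by
      rw [Sym2.eq_iff]
      rintro (⟨rfl, rfl⟩ | ⟨rfl, rfl⟩)
      · exact hDuv
      · exact fun h => hDuv (hsym _ _ h)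
    constructor
    · rintro ⟨hne, (⟨h1, h2⟩ | ⟨h1, h2⟩)⟩
      · exact Or.inl h1
      · exact Or.inr h1
    · rintro (hD | hseq)
      · refine ⟨fun h => hirr _ _ hD (x.injective h), Or.inl ⟨hD, fun h => hnot h hD⟩⟩
      · refine ⟨?_, Or.inr ⟨hseq, hnot hseq⟩⟩
        have : i ≠ j := by
          rw [Sym2.eq_iff] at hseq
          rcases hseq with ⟨rfl, rfl⟩ | ⟨rfl, rfl⟩
          · exact huv
          · exact huv.symm
        exact fun h => this (x.injective h)
  · intro u' v' hne hD hs
    obtain ⟨a', b', hab', ha', hb', hNa', hNb'⟩ := hgad u' v' hne hD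
    obtain ⟨d1, d2, d3, d4⟩ := gadget_disjoint ha hb ha' hb' hNa hNb hNa' hNb' (Ne.symm hs)
    refine ⟨a', b', hab', ha', hb', ?_, ?_⟩
    · ext y
      rw [SimpleGraph.mem_neighborSet, padj, sw_of_ne d1.symm d3.symm]
      have hcr : ¬((a' = x u ∧ sw a b y = x v) ∨ (a' = x v ∧ sw a b y = x u)) := by
        rintro (⟨h, -⟩ | ⟨h, -⟩)
        exacts [ha' u h, ha' v h]
      have hx : ∀ P : Prop,
          Xor' P ((a' = x u ∧ sw a b y = x v) ∨ (a' = x v ∧ sw a b y = x u)) ↔ P := by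
        intro P; unfold Xor' Xor; tauto
      rw [hx, nbhd_mem_iff hNa']
      have e1 : sw a b y = x u' ↔ y = x u' := by
        rw [sw_eq_iff, sw_of_ne (ha u').symm (hb u').symm]
      have e2 : sw a b y = b' ↔ y = b' := by
        rw [sw_eq_iff, sw_of_ne d2.symm d4.symm]
      rw [e1, e2]
      simp only [Set.mem_insert_iff, Set.mem_singleton_iff]
      constructor
      · rintro ⟨-, h⟩; exact h
      · rintro (rfl | rfl)
        · exact ⟨ha' u', Or.inl rfl⟩
        · exact ⟨hab', Or.inr rfl⟩
    · ext y
      rw [SimpleGraph.mem_neighborSet, padj, sw_of_ne d2.symm d4.symm]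
      have hcr : ¬((b' = x u ∧ sw a b y = x v) ∨ (b' = x v ∧ sw a b y = x u)) := by
        rintro (⟨h, -⟩ | ⟨h, -⟩)
        exacts [hb' u h, hb' v h]
      have hx : ∀ P : Prop,
          Xor' P ((b' = x u ∧ sw a b y = x v) ∨ (b' = x v ∧ sw a b y = x u)) ↔ P := by
        intro P; unfold Xor' Xor; tauto
      rw [hx, nbhd_mem_iff hNb']
      have e1 : sw a b y = x v' ↔ y = x v' := by
        rw [sw_eq_iff, sw_of_ne (ha v').symm (hb v').symm]
      have e2 : sw a b y = a' ↔ y = a' := by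
        rw [sw_eq_iff, sw_of_ne d1.symm d3.symm]
      rw [e1, e2]
      simp only [Set.mem_insert_iff, Set.mem_singleton_iff]
      constructor
      · rintro ⟨-, h⟩; exact h
      · rintro (rfl | rfl)
        · exact ⟨hb' v', Or.inl rfl⟩
        · exact ⟨hab'.symm, Or.inr rfl⟩

/-- Iterating `pivot_step` along a list of pairs. -/
private lemma pivot_chain {W : Type} {r : ℕ} (x : Fin r ↪ W) :
    ∀ (l : List (Fin r × Fin r)) (G : SimpleGraph W) (D : Fin r → Fin r → Prop),
      (∀ i j, D i j → D j i) → (∀ i j, D i j → i ≠ j) →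
      (∀ i j, G.Adj (x i) (x j) ↔ D i j) →
      (∀ u v : Fin r, u ≠ v → ¬ D u v → Gdgt x G u v) →
      (∀ q ∈ l, q.1 ≠ q.2 ∧ ¬ D q.1 q.2) →
      l.Pairwise (fun q q' => s(q.1, q.2) ≠ s(q'.1, q'.2)) →
      ∃ G' : SimpleGraph W,
        (∀ i j, G'.Adj (x i) (x j) ↔ (D i j ∨ ∃ q ∈ l, s(i, j) = s(q.1, q.2))) ∧
        ∀ {T : Type} {J : SimpleGraph T}, IsPivotMinor J G' → IsPivotMinor J G := by
  intro l
  induction l with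
  | nil =>
    intro G D _ _ hterm _ _ _
    exact ⟨G, fun i j => by simpa using hterm i j, fun h => h⟩
  | cons q l ih =>
    intro G D hsym hirr hterm hgad hl hpw
    obtain ⟨hq1, hq2⟩ := hl q (List.mem_cons_self (a := q) (l := l))
    obtain ⟨G1, hterm1, hgad1, htr1⟩ :=
      pivot_step x G D hsym hirr hterm hgad q.1 q.2 hq1 hq2
    set D' : Fin r → Fin r → Prop := fun i j => D i j ∨ s(i, j) = s(q.1, q.2) with hD'
    have hsym' : ∀ i j, D' i j → D' j i := by
      rintro i j (h | h)
      · exact Or.inl (hsym i j h)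
      · exact Or.inr (Sym2.eq_swap.trans h)
    have hirr' : ∀ i j, D' i j → i ≠ j := by
      rintro i j (h | h)
      · exact hirr i j h
      · rw [Sym2.eq_iff] at h
        rintro rfl
        rcases h with ⟨h1, h2⟩ | ⟨h1, h2⟩
        · exact hq1 (h1.symm.trans h2)
        · exact hq1 (h2.symm.trans h1)
    have hgad' : ∀ u v : Fin r, u ≠ v → ¬ D' u v → Gdgt x G1 u v := by
      intro u v huv hD
      simp only [hD'] at hD
      push_neg at hD
      exact hgad1 u v huv hD.1 hD.2
    have hl' : ∀ q' ∈ l, q'.1 ≠ q'.2 ∧ ¬ D' q'.1 q'.2 := by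
      intro q' hq'
      obtain ⟨h1, h2⟩ := hl q' (List.mem_cons_of_mem q hq')
      refine ⟨h1, ?_⟩
      rintro (h | h)
      · exact h2 h
      · exact (List.rel_of_pairwise_cons hpw hq') h.symm
    obtain ⟨G2, hterm2, htr2⟩ := ih G1 D' hsym' hirr' hterm1 hgad' hl' hpw.of_cons
    refine ⟨G2, fun i j => ?_, fun h => htr1 (htr2 h)⟩
    rw [hterm2 i j]
    simp only [hD', List.mem_cons]
    constructor
    · rintro ((h | h) | ⟨q', hq', h⟩)
      · exact Or.inl h
      · exact Or.inr ⟨q, Or.inl rfl, h⟩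
      · exact Or.inr ⟨q', Or.inr hq', h⟩
    · rintro (h | ⟨q', (rfl | hq'), h⟩)
      · exact Or.inl (Or.inl h)
      · exact Or.inl (Or.inr h)
      · exact Or.inr ⟨q', hq', h⟩

/-- `K_r^2` (each edge of `K_r` replaced by a path of length 3) contains every graph
on at most `r` vertices as a pivot-minor. -/
theorem Krsq_contains_all_pivot_minors (r : ℕ) {W : Type} [Fintype W] (G : SimpleGraph W)
    (hG : IsSubdivisionWith (⊤ : SimpleGraph (Fin r)) (fun n => n = 3) G)
    {U : Type} [Fintype U] (J : SimpleGraph U) (hU : Fintype.card U ≤ r) :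
    IsPivotMinor J G := by
  classical
  obtain ⟨x, p, hpath, hlen, hrev, hint, hdisj, -, hadj⟩ := hG
  -- decompose each replacement path
  have decomp : ∀ (u v : Fin r) (h : (⊤ : SimpleGraph (Fin r)).Adj u v), ∃ a b : W,
      (∀ i, a ≠ x i) ∧ (∀ i, b ≠ x i) ∧ a ≠ b ∧ a ≠ x u ∧ a ≠ x v ∧ b ≠ x u ∧ b ≠ x v ∧
      a ∈ (p u v h).support ∧ b ∈ (p u v h).support ∧
      (∀ y z, (p u v h).toSubgraph.Adj y z ↔
        (s(y, z) = s(x u, a) ∨ s(y, z) = s(a, b) ∨ s(y, z) = s(b, x v))) := by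
    intro u v h
    obtain ⟨a, b, h1, h2, h3, weq⟩ := walk_length_three (p u v h) (hlen u v h)
    have hsup : (p u v h).support = [x u, a, b, x v] := by rw [weq]; simp
    have hnd := (hpath u v h).support_nodup
    rw [hsup] at hnd
    simp [List.nodup_cons] at hnd
    obtain ⟨⟨hua, hub, huv⟩, ⟨hab, hav⟩, hbv⟩ := hnd
    have hha : a ∈ (p u v h).support := by rw [hsup]; simp
    have hhb : b ∈ (p u v h).support := by rw [hsup]; simp
    have hanr : ∀ i, a ≠ x i := by
      intro i hi
      rcases hint u v h a hha ⟨i, hi.symm⟩ with h' | h'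
      · exact hua h'.symm
      · exact hav h'
    have hbnr : ∀ i, b ≠ x i := by
      intro i hi
      rcases hint u v h b hhb ⟨i, hi.symm⟩ with h' | h'
      · exact hub h'.symm
      · exact hbv h'
    refine ⟨a, b, hanr, hbnr, hab, fun h' => hua h'.symm, hav, fun h' => hub h'.symm, hbv,
      hha, hhb, ?_⟩
    intro y z
    rw [weq]
    simp only [Walk.toSubgraph, Subgraph.sup_adj, subgraphOfAdj_adj, singletonSubgraph_adj,
      Pi.bot_apply]
    constructor
    · rintro (h' | h' | h' | h')
      · exact Or.inl h'.symm
      · exact Or.inr (Or.inl h'.symm)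
      · exact Or.inr (Or.inr h'.symm)
      · exact h'.elim
    · rintro (h' | h' | h')
      · exact Or.inl h'.symm
      · exact Or.inr (Or.inl h'.symm)
      · exact Or.inr (Or.inr (Or.inl h'.symm))
  -- an edge of `G` at a nonterminal vertex of the path `p u v h` is an edge of that path
  have key : ∀ (u v : Fin r) (h : (⊤ : SimpleGraph (Fin r)).Adj u v) (y z : W),
      y ∈ (p u v h).support → (∀ i, y ≠ x i) → G.Adj y z → (p u v h).toSubgraph.Adj y z := by
    intro u v h y z hy hyx hGyz
    obtain ⟨k, l, hkl, hT⟩ := (hadj y z).1 hGyz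
    by_cases hs : s(k, l) = s(u, v)
    · rcases Sym2.eq_iff.1 hs with ⟨rfl, rfl⟩ | ⟨rfl, rfl⟩
      · exact hT
      · have hre : p k l hkl = (p l k h).reverse := hrev l k h
        rw [hre, Walk.toSubgraph_reverse] at hT
        exact hT
    · have hy2 : y ∈ (p k l hkl).support := by
        have := hT.fst_mem
        rw [Walk.verts_toSubgraph] at this
        exact this
      have : y ∈ Set.range x := hdisj u v h k l hkl (fun h' => hs h'.symm) y hy hy2
      obtain ⟨i, hi⟩ := this
      exact absurd hi.symm (hyx i)
  -- terminals are pairwise nonadjacent in `G`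
  have hterm0 : ∀ i j : Fin r, ¬ G.Adj (x i) (x j) := by
    intro i j hA
    obtain ⟨k, l, hkl, hT⟩ := (hadj _ _).1 hA
    obtain ⟨a, b, ha, hb, -, -, -, -, -, -, -, hTiff⟩ := decomp k l hkl
    rcases (hTiff _ _).1 hT with h' | h' | h' <;> rcases Sym2.eq_iff.1 h' with ⟨e1, e2⟩ | ⟨e1, e2⟩
    · exact ha j e2.symm
    · exact ha i e1.symm
    · exact ha i e1.symm
    · exact hb i e1.symm
    · exact hb i e1.symm
    · exact hb j e2.symm
  -- each pair of terminals carries a gadget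
  have hgad0 : ∀ u v : Fin r, u ≠ v → Gdgt x G u v := by
    intro u v huv
    have h : (⊤ : SimpleGraph (Fin r)).Adj u v := by simpa using huv
    obtain ⟨a, b, ha, hb, hab, hau, hav, hbu, hbv, hsa, hsb, hTiff⟩ := decomp u v h
    refine ⟨a, b, hab, ha, hb, ?_, ?_⟩
    · ext y
      rw [SimpleGraph.mem_neighborSet]
      constructor
      · intro hGy
        have hT := key u v h a y hsa ha hGy
        rcases (hTiff _ _).1 hT with h' | h' | h' <;>
          rcases Sym2.eq_iff.1 h' with ⟨e1, e2⟩ | ⟨e1, e2⟩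
        · exact absurd e1 hau
        · simp [e2]
        · simp [e2]
        · exact absurd e1 hab
        · exact absurd e1 hab
        · exact absurd e1 hav
      · intro hy
        rcases hy with rfl | hy
        · exact (hadj _ _).2 ⟨u, v, h, (hTiff _ _).2 (Or.inl Sym2.eq_swap)⟩
        · rw [Set.mem_singleton_iff] at hy
          subst hy
          exact (hadj _ _).2 ⟨u, v, h, (hTiff _ _).2 (Or.inr (Or.inl rfl))⟩
    · ext y
      rw [SimpleGraph.mem_neighborSet]
      constructor
      · intro hGy
        have hT := key u v h b y hsb hb hGy
        rcases (hTiff _ _).1 hT with h' | h' | h' <;>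
          rcases Sym2.eq_iff.1 h' with ⟨e1, e2⟩ | ⟨e1, e2⟩
        · exact absurd e1 hbu
        · exact absurd e1 hab.symm
        · exact absurd e1 hab.symm
        · simp [e2]
        · simp [e2]
        · exact absurd e1 hbv
      · intro hy
        rcases hy with rfl | hy
        · exact (hadj _ _).2 ⟨u, v, h, (hTiff _ _).2 (Or.inr (Or.inr rfl))⟩
        · rw [Set.mem_singleton_iff] at hy
          subst hy
          exact (hadj _ _).2 ⟨u, v, h, (hTiff _ _).2 (Or.inr (Or.inl Sym2.eq_swap))⟩
  -- choose the embedding of the vertex set of `J` and list the edges of `J`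
  obtain ⟨f⟩ : Nonempty (U ↪ Fin r) :=
    Function.Embedding.nonempty_of_card_le (by simpa using hU)
  let g : U ≃ Fin (Fintype.card U) := Fintype.equivFin U
  let E : Finset (U × U) := Finset.univ.filter fun q : U × U => J.Adj q.1 q.2 ∧ g q.1 < g q.2
  let l : List (Fin r × Fin r) := E.toList.map fun q => (f q.1, f q.2)
  have hmemE : ∀ q ∈ E.toList, J.Adj q.1 q.2 ∧ g q.1 < g q.2 := by
    intro q hq
    rw [Finset.mem_toList, Finset.mem_filter] at hq
    exact hq.2
  have hl : ∀ q' ∈ l, q'.1 ≠ q'.2 ∧ ¬ (fun _ _ : Fin r => False) q'.1 q'.2 := by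
    intro q' hq'
    obtain ⟨q, hq, rfl⟩ := List.mem_map.1 hq'
    refine ⟨fun h => ?_, not_false⟩
    exact (hmemE q hq).1.ne (f.injective h)
  have hpw : l.Pairwise (fun q q' => s(q.1, q.2) ≠ s(q'.1, q'.2)) := by
    have h1 : E.toList.Pairwise (· ≠ ·) := E.nodup_toList
    have h2 : E.toList.Pairwise (fun q q' =>
        (J.Adj q.1 q.2 ∧ g q.1 < g q.2) → (J.Adj q'.1 q'.2 ∧ g q'.1 < g q'.2) →
          s(f q.1, f q.2) ≠ s(f q'.1, f q'.2)) := by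
      refine h1.imp ?_
      intro q q' hne hq hq' hs
      rw [Sym2.eq_iff] at hs
      rcases hs with ⟨e1, e2⟩ | ⟨e1, e2⟩
      · exact hne (Prod.ext (f.injective e1) (f.injective e2))
      · have e1' := f.injective e1
        have e2' := f.injective e2
        rw [e1', e2'] at hq
        exact absurd (hq.2.trans hq'.2) (lt_irrefl _)
    have h3 : E.toList.Pairwise (fun q q' => s(f q.1, f q.2) ≠ s(f q'.1, f q'.2)) := by
      rw [List.pairwise_iff_forall_sublist] at h2 ⊢
      intro q q' hsub
      have hq := hmemE q (hsub.subset (by simp))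
      have hq' := hmemE q' (hsub.subset (by simp))
      exact h2 hsub hq hq'
    exact h3.map _ (fun q q' h => h)
  obtain ⟨G', hterm', htr⟩ := pivot_chain x l G (fun _ _ => False)
    (fun _ _ h => h) (fun _ _ h => h.elim)
    (fun i j => iff_false_intro (hterm0 i j)) (fun u v h _ => hgad0 u v h) hl hpw
  -- the graph induced on the images of the vertices of `J` is `J`
  have hJiff : ∀ i j : U, G'.Adj (x (f i)) (x (f j)) ↔ J.Adj i j := by
    intro i j
    rw [hterm' (f i) (f j)]
    constructor
    · rintro (h | ⟨q', hq', hs⟩)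
      · exact h.elim
      · obtain ⟨q, hq, rfl⟩ := List.mem_map.1 hq'
        obtain ⟨hadjq, -⟩ := hmemE q hq
        rw [Sym2.eq_iff] at hs
        rcases hs with ⟨e1, e2⟩ | ⟨e1, e2⟩
        · rw [f.injective e1, f.injective e2]
          exact hadjq
        · rw [f.injective e1, f.injective e2]
          exact hadjq.symm
    · intro hij
      refine Or.inr ?_
      have hne : g i ≠ g j := fun h => hij.ne (g.injective h)
      rcases hne.lt_or_gt with hlt | hlt
      · refine ⟨(f i, f j), List.mem_map.2 ⟨(i, j), ?_, rfl⟩, rfl⟩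
        rw [Finset.mem_toList, Finset.mem_filter]
        exact ⟨Finset.mem_univ _, hij, hlt⟩
      · refine ⟨(f j, f i), List.mem_map.2 ⟨(j, i), ?_, rfl⟩, Sym2.eq_swap⟩
        rw [Finset.mem_toList, Finset.mem_filter]
        exact ⟨Finset.mem_univ _, hij.symm, hlt⟩
  -- delete everything else and read off `J`
  refine htr ?_
  have hinj : Function.Injective fun i : U => x (f i) := fun i j h =>
    f.injective (x.injective h)
  refine IsPivotMinor.delete (Set.range fun i : U => x (f i)) (IsPivotMinor.of_iso ⟨?_⟩)
  refine ⟨Equiv.ofInjective _ hinj, ?_⟩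
  intro i j
  simp only [Equiv.ofInjective_apply, comap_adj, Function.Embedding.coe_subtype]
  exact hJiff i j
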